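/- arXiv:1508.04485 — 2 statements merged into one kernel-verified Lean document; each statement's English description precedes it below -/
import Mathlib

section
/- If a right node k is a singleton (exactly one defective item ℓ is adjacent to it), then with the signature matrix whose i-th column is (b_i, b̄_i), the measurement z_k has Hamming weight exactly L, and the first L bits of z_k equal b_ℓ, so ℓ is recovered exactly. -/
/-- Hamming weight: the number of ones of a binary vector. -/
def hammingWeight {L : ℕ} (b : Fin L → Bool) : ℕ :=
  (Finset.univ.filter fun i => b i = true).card

/-- The `L`-bit binary representation of the index `i` (i.e. of the integer `i - 1` in
one-based indexing) among `n = 2^L` items. -/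
def binRep {L n : ℕ} (i : Fin n) : Fin L → Bool := fun k => (i : ℕ).testBit k

/-- If right node `k` is a singleton, i.e. the set `D` of its defective neighbors is
exactly `{ℓ}`, then with signatures `u_i = (b_i, b̄_i)` the measurement
`z_k = ⋁_{i ∈ D} u_i` has Hamming weight exactly `L`, its first `L` bits equal `b_ℓ`,
and `ℓ` is recovered exactly (the first half determines `ℓ` uniquely). -/
theorem singleton_resolved {L : ℕ} (n : ℕ) (hn : n = 2 ^ L)
    (D : Finset (Fin n)) (ℓ : Fin n) (hD : D = {ℓ})
    (z₁ z₂ : Fin L → Bool)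
    (hz₁ : z₁ = fun j => D.sup fun i => binRep i j)
    (hz₂ : z₂ = fun j => D.sup fun i => !(binRep (L := L) i j)) :
    hammingWeight z₁ + hammingWeight z₂ = L ∧
    z₁ = binRep ℓ ∧
    ∀ ℓ' : Fin n, binRep (L := L) ℓ' = z₁ → ℓ' = ℓ := by
  subst hD hz₁ hz₂
  simp only [Finset.sup_singleton]
  refine ⟨?_, trivial, ?_⟩
  · unfold hammingWeight
    rw [← Finset.card_union_of_disjoint]
    · rw [show (Finset.univ.filter fun i => binRep ℓ i = true) ∪
          (Finset.univ.filter fun i => (!binRep (L := L) ℓ i) = true) = Finset.univ by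
        ext j; simp [Bool.not_eq_true']]
      simp
    · rw [Finset.disjoint_filter]
      intro j _ h
      simp [h]
  · intro ℓ' h
    have : (ℓ' : ℕ) = (ℓ : ℕ) := by
      apply Nat.eq_of_testBit_eq
      intro j
      by_cases hj : j < L
      · exact congrFun h ⟨j, hj⟩
      · have h1 : (ℓ' : ℕ) < 2 ^ j :=
          lt_of_lt_of_le (hn ▸ ℓ'.isLt) (Nat.pow_le_pow_right (by norm_num) (le_of_not_gt hj))
        have h2 : (ℓ : ℕ) < 2 ^ j :=
          lt_of_lt_of_le (hn ▸ ℓ.isLt) (Nat.pow_le_pow_right (by norm_num) (le_of_not_gt hj))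
        rw [Nat.testBit_lt_two_pow h1, Nat.testBit_lt_two_pow h2]
    exact Fin.ext this
end

section
/- If a right node is connected to exactly two defective items i ≠ j, then the Hamming weight of its measurement z = u_i ∨ u_j strictly exceeds L, where u_i = (b_i, b̄_i); hence a right node adjacent to exactly two distinct defective items is never mistaken for a singleton by the weight-L test. -/
/-- If a right node is connected to exactly two distinct defective items `i ≠ j`, then
the Hamming weight of its measurement `z = u_i ∨ u_j` (with `u_i = (b_i, b̄_i)`)
strictly exceeds `L`: such a node is never mistaken for a singleton by the
weight-`L` test. -/
theorem doubleton_weight_gt {L : ℕ} (n : ℕ) (hn : n = 2 ^ L)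
    (i j : Fin n) (hij : i ≠ j) :
    hammingWeight (fun k => binRep (L := L) i k || binRep j k) +
      hammingWeight (fun k => !(binRep (L := L) i k) || !(binRep j k)) > L := by
  classical
  -- there is a bit position < L where i and j differ
  have hne : (i : ℕ) ≠ (j : ℕ) := fun h => hij (Fin.ext h)
  have hi : (i : ℕ) < 2 ^ L := hn ▸ i.isLt
  have hj : (j : ℕ) < 2 ^ L := hn ▸ j.isLt
  have hex : ∃ k : Fin L, (i : ℕ).testBit k ≠ (j : ℕ).testBit k := by
    by_contra h
    push_neg at h
    apply hne
    apply Nat.eq_of_testBit_eq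
    intro k
    by_cases hk : k < L
    · exact h ⟨k, hk⟩
    · rw [Nat.testBit_lt_two_pow (lt_of_lt_of_le hi (Nat.pow_le_pow_right (by norm_num) (le_of_not_gt hk))),
        Nat.testBit_lt_two_pow (lt_of_lt_of_le hj (Nat.pow_le_pow_right (by norm_num) (le_of_not_gt hk)))]
  obtain ⟨k, hk⟩ := hex
  unfold hammingWeight binRep
  set A := Finset.univ.filter fun k : Fin L => ((i : ℕ).testBit k || (j : ℕ).testBit k) = true with hA
  set B := Finset.univ.filter fun k : Fin L => (!(i : ℕ).testBit k || !(j : ℕ).testBit k) = true with hB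
  have hunion : A ∪ B = Finset.univ := by
    ext x
    simp only [hA, hB, Finset.mem_union, Finset.mem_filter, Finset.mem_univ, true_and, iff_true]
    cases h1 : (i : ℕ).testBit x <;> cases h2 : (j : ℕ).testBit x <;> simp
  have hkAB : k ∈ A ∩ B := by
    simp only [hA, hB, Finset.mem_inter, Finset.mem_filter, Finset.mem_univ, true_and]
    cases h1 : (i : ℕ).testBit k <;> cases h2 : (j : ℕ).testBit k <;>
      simp_all
  have hcard : A.card + B.card = (A ∪ B).card + (A ∩ B).card :=
    (Finset.card_union_add_card_inter A B).symm
  have : 0 < (A ∩ B).card := Finset.card_pos.mpr ⟨k, hkAB⟩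
  rw [hunion, Finset.card_univ, Fintype.card_fin] at hcard
  omega
end
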